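/- Let T be a compact metric space and (ξ_k)_{k≥1} a sequence of independent standard normal random variables on a probability space (Ω, F, P). Let (f_k)_{k≥1} be continuous real-valued functions on T such that the partial sum processes W_N(t) = Σ_{k=1}^N ξ_k f_k(t) converge, almost surely uniformly in t ∈ T, to a limit process W(t), and moreover E[sup_{t∈T} |W_N(t) − W(t)|²] → 0 as N → ∞. Let (a_k)_{k≥1} be real numbers such that the series Σ_{k=1}^∞ a_k f_k(t) converges uniformly on T to a function w(t). Then for every ε > 0, P(sup_{t∈T} |W(t) − w(t)| < ε) > 0. -/

import Mathlib

open MeasureTheory ProbabilityTheory Filter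

/-- Theorem 4 (Karhunen–Loève form): a Gaussian process given by a random series
assigns positive probability to every uniform neighborhood of a function that is a
uniform limit of the corresponding deterministic series. -/
theorem gaussian_process_uniform_ball_positive
    {T : Type*} [MetricSpace T] [CompactSpace T] [Nonempty T]
    {Ω : Type*} [MeasurableSpace Ω] (P : Measure Ω) [IsProbabilityMeasure P]
    (ξ : ℕ → Ω → ℝ) (hmeas : ∀ k, Measurable (ξ k))
    (hindep : iIndepFun ξ P)
    (hgauss : ∀ k, Measure.map (ξ k) P = gaussianReal 0 1)
    (f : ℕ → T → ℝ) (hf : ∀ k, Continuous (f k))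
    (W : Ω → T → ℝ)
    (hWconv : ∀ᵐ ω ∂P, TendstoUniformly
      (fun N t => ∑ k ∈ Finset.range N, ξ k ω * f k t) (W ω) atTop)
    (hL2 : Tendsto
      (fun N => ∫ ω, (⨆ t, |(∑ k ∈ Finset.range N, ξ k ω * f k t) - W ω t|) ^ 2 ∂P)
      atTop (nhds 0))
    (a : ℕ → ℝ) (w : T → ℝ)
    (hw : TendstoUniformly (fun N t => ∑ k ∈ Finset.range N, a k * f k t) w atTop) :
    ∀ ε > 0, 0 < P {ω | (⨆ t, |W ω t - w t|) < ε} := by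
  intro ε hε
  classical
  -- a countable dense subset of T
  obtain ⟨D, hDcount, hDdense⟩ := TopologicalSpace.exists_countable_dense T
  haveI : Countable D := hDcount.to_subtype
  haveI : Nonempty D := hDdense.nonempty.to_subtype
  set δ : ℝ := ε / 4 with hδdef
  have hδ : 0 < δ := by positivity
  -- the σ-algebras generated by the individual variables
  set m : ℕ → MeasurableSpace Ω := fun k => MeasurableSpace.comap (ξ k) inferInstance with hm
  have hmle : ∀ k, m k ≤ ‹MeasurableSpace Ω› := fun k => measurable_iff_comap_le.mp (hmeas k)
  have hξm : ∀ k, Measurable[m k] (ξ k) := fun k => measurable_iff_comap_le.mpr le_rfl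
  -- the (measurable) tail suprema
  set G : ℕ → ℕ → Ω → ENNReal := fun N M ω =>
    ⨆ x : D, ENNReal.ofReal |∑ k ∈ Finset.Ico N M, ξ k ω * f k (x : T)| with hGdef
  set h' : ℕ → Ω → ENNReal := fun N ω => Filter.limsup (fun M => G N M ω) atTop with hh'
  have hGmeas : ∀ N M, Measurable[⨆ k ∈ ({i | i < N} : Set ℕ)ᶜ, m k] (G N M) := by
    intro N M
    letI : MeasurableSpace Ω := ⨆ k ∈ ({i | i < N} : Set ℕ)ᶜ, m k
    apply Measurable.iSup
    intro x
    apply ENNReal.measurable_ofReal.comp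
    apply Measurable.abs
    apply Finset.measurable_sum
    intro k hk
    have hkN : N ≤ k := (Finset.mem_Ico.mp hk).1
    have hkmem : k ∈ ({i | i < N} : Set ℕ)ᶜ := by
      simp only [Set.mem_compl_iff, Set.mem_setOf_eq, not_lt]
      exact hkN
    exact ((hξm k).mono (le_biSup m hkmem) le_rfl).mul_const _
  have hh'meas : ∀ N, Measurable[⨆ k ∈ ({i | i < N} : Set ℕ)ᶜ, m k] (h' N) :=
    fun N => Measurable.limsup (hGmeas N)
  -- the "good" sets Fq on which all tails are uniformly small
  set c : ENNReal := ENNReal.ofReal (δ / 2) with hc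
  set F : ℕ → Set Ω := fun q => {ω | ∀ N', q ≤ N' → h' N' ω ≤ c} with hF
  -- the convergence set is contained in ⋃ q, F q
  have hFcover : {ω | TendstoUniformly
      (fun N t => ∑ k ∈ Finset.range N, ξ k ω * f k t) (W ω) atTop} ⊆ ⋃ q, F q := by
    intro ω hω
    rw [Set.mem_setOf_eq, Metric.tendstoUniformly_iff] at hω
    obtain ⟨q, hq⟩ := eventually_atTop.mp (hω (δ/4) (by positivity))
    refine Set.mem_iUnion.mpr ⟨q, fun N' hN' => ?_⟩
    refine Filter.limsup_le_of_le (by isBoundedDefault) ?_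
    filter_upwards [eventually_ge_atTop N'] with M hM
    refine iSup_le ?_
    rintro ⟨x, hx⟩
    rw [Finset.sum_Ico_eq_sub _ hM]
    apply ENNReal.ofReal_le_ofReal
    have h1 := hq M (le_trans hN' hM) x
    have h2 := hq N' hN' x
    rw [Real.dist_eq] at h1 h2
    have h3 := abs_sub_le (∑ k ∈ Finset.range M, ξ k ω * f k x) (W ω x)
      (∑ k ∈ Finset.range N', ξ k ω * f k x)
    rw [abs_sub_comm (∑ k ∈ Finset.range M, ξ k ω * f k x) (W ω x)] at h3
    linarith
  -- hence some F q has positive probability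
  have hbad : P {ω | ¬ TendstoUniformly
      (fun N t => ∑ k ∈ Finset.range N, ξ k ω * f k t) (W ω) atTop} = 0 := ae_iff.mp hWconv
  have hUnion1 : (1 : ENNReal) ≤ P (⋃ q, F q) := by
    have hsub : (Set.univ : Set Ω) ⊆ {ω | ¬ TendstoUniformly
        (fun N t => ∑ k ∈ Finset.range N, ξ k ω * f k t) (W ω) atTop} ∪ ⋃ q, F q := by
      intro ω _
      by_cases h : TendstoUniformly (fun N t => ∑ k ∈ Finset.range N, ξ k ω * f k t) (W ω) atTop
      · exact Or.inr (hFcover h)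
      · exact Or.inl h
    calc (1 : ENNReal) = P Set.univ := measure_univ.symm
      _ ≤ P ({ω | ¬ TendstoUniformly
          (fun N t => ∑ k ∈ Finset.range N, ξ k ω * f k t) (W ω) atTop} ∪ ⋃ q, F q) :=
            measure_mono hsub
      _ ≤ P {ω | ¬ TendstoUniformly
          (fun N t => ∑ k ∈ Finset.range N, ξ k ω * f k t) (W ω) atTop} + P (⋃ q, F q) :=
            measure_union_le _ _
      _ = P (⋃ q, F q) := by rw [hbad, zero_add]
  have hEx : ∃ q, P (F q) ≠ 0 := by
    by_contra h
    push_neg at h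
    have hle := measure_iUnion_le (μ := P) F
    simp only [h, tsum_zero, nonpos_iff_eq_zero] at hle
    rw [hle] at hUnion1
    exact absurd hUnion1 (by simp)
  obtain ⟨q, hq0⟩ := hEx
  -- choose N₀ controlling the deterministic series
  obtain ⟨N₀, hN₀⟩ := eventually_atTop.mp (Metric.tendstoUniformly_iff.mp hw δ hδ)
  set N : ℕ := max q N₀ with hNdef
  -- bounds for the f k
  have hB : ∀ k : ℕ, ∃ B : ℝ, 0 ≤ B ∧ ∀ t, |f k t| ≤ B := by
    intro k
    obtain ⟨t0, -, ht0⟩ := isCompact_univ.exists_isMaxOn Set.univ_nonempty (hf k).abs.continuousOn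
    exact ⟨|f k t0|, abs_nonneg _, fun t => ht0 (Set.mem_univ t)⟩
  choose B hB0 hBle using hB
  have hsumB : 0 ≤ ∑ k ∈ Finset.range N, B k := Finset.sum_nonneg fun k _ => hB0 k
  set η : ℝ := δ / (∑ k ∈ Finset.range N, B k + 1) with hηdef
  have hηpos : 0 < η := div_pos hδ (by linarith)
  -- the two events
  set A : Set Ω := ⋂ k ∈ Finset.range N, ξ k ⁻¹' Metric.ball (a k) η with hAdef
  set E : Set Ω := {ω | h' N ω < ENNReal.ofReal δ} with hEdef
  -- A has positive probability
  have hAmeas_k : ∀ k, MeasurableSet[m k] (ξ k ⁻¹' Metric.ball (a k) η) :=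
    fun k => ⟨_, measurableSet_ball, rfl⟩
  have hPA : P A = ∏ k ∈ Finset.range N, P (ξ k ⁻¹' Metric.ball (a k) η) :=
    hindep.meas_biInter fun k _ => hAmeas_k k
  have hPApos : P A ≠ 0 := by
    rw [hPA, Finset.prod_ne_zero_iff]
    intro k _
    rw [← Measure.map_apply (hmeas k) measurableSet_ball, hgauss k]
    intro h0
    have hvol := (gaussianReal_absolutelyContinuous' 0 one_ne_zero) h0
    rw [Real.volume_ball] at hvol
    simp only [ENNReal.ofReal_eq_zero] at hvol
    linarith
  -- E has positive probability
  have hEmeas : MeasurableSet[⨆ k ∈ ({i | i < N} : Set ℕ)ᶜ, m k] E := by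
    letI : MeasurableSpace Ω := ⨆ k ∈ ({i | i < N} : Set ℕ)ᶜ, m k
    exact measurableSet_lt (hh'meas N) measurable_const
  have hFE : F q ⊆ E := by
    intro ω hω
    refine lt_of_le_of_lt (hω N (le_max_left _ _)) ?_
    exact (ENNReal.ofReal_lt_ofReal_iff hδ).mpr (by linarith)
  have hPE : P E ≠ 0 := by
    intro h
    exact hq0 (le_antisymm (le_trans (measure_mono hFE) h.le) zero_le)
  -- independence of A and E
  have hInd := ProbabilityTheory.indep_biSup_compl hmle hindep.iIndep ({i | i < N} : Set ℕ)
  have hAmem : MeasurableSet[⨆ k ∈ ({i | i < N} : Set ℕ), m k] A := by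
    letI : MeasurableSpace Ω := ⨆ k ∈ ({i | i < N} : Set ℕ), m k
    refine Finset.measurableSet_biInter _ fun k hk => ?_
    have hkmem : k ∈ ({i | i < N} : Set ℕ) := Finset.mem_range.mp hk
    exact le_biSup m hkmem _ (hAmeas_k k)
  have hAEeq : P (A ∩ E) = P A * P E :=
    (ProbabilityTheory.Indep_iff _ _ _).mp hInd A E hAmem hEmeas
  -- the inclusion into the target event
  have hsub : (A ∩ E) \ {ω | ¬ TendstoUniformly
      (fun N t => ∑ k ∈ Finset.range N, ξ k ω * f k t) (W ω) atTop}
      ⊆ {ω | (⨆ t, |W ω t - w t|) < ε} := by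
    rintro ω ⟨⟨hωA, hωE⟩, hωG⟩
    have hωconv : TendstoUniformly
        (fun M t => ∑ k ∈ Finset.range M, ξ k ω * f k t) (W ω) atTop := not_not.mp hωG
    -- step 1: on the dense set, |W - S_N| < δ
    have hstep1 : ∀ x : D, |W ω (x : T) - ∑ k ∈ Finset.range N, ξ k ω * f k (x : T)| < δ := by
      intro x
      have h1 : Tendsto (fun M => ∑ k ∈ Finset.range M, ξ k ω * f k (x : T)) atTop
          (nhds (W ω (x : T))) := hωconv.tendsto_at (x : T)
      have h2 : Continuous fun r : ℝ =>
          ENNReal.ofReal |r - ∑ k ∈ Finset.range N, ξ k ω * f k (x : T)| :=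
        ENNReal.continuous_ofReal.comp ((continuous_id.sub continuous_const).abs)
      have hxlim : Tendsto (fun M => ENNReal.ofReal
          |(∑ k ∈ Finset.range M, ξ k ω * f k (x : T)) -
            ∑ k ∈ Finset.range N, ξ k ω * f k (x : T)|) atTop
          (nhds (ENNReal.ofReal
            |W ω (x : T) - ∑ k ∈ Finset.range N, ξ k ω * f k (x : T)|)) :=
        (h2.continuousAt).tendsto.comp h1
      have key : ENNReal.ofReal
          |W ω (x : T) - ∑ k ∈ Finset.range N, ξ k ω * f k (x : T)| ≤ h' N ω := by
        rw [← hxlim.limsup_eq]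
        refine Filter.limsup_le_limsup ?_ (by isBoundedDefault) (by isBoundedDefault)
        filter_upwards [eventually_ge_atTop N] with M hM
        rw [← Finset.sum_Ico_eq_sub _ hM]
        exact le_iSup (fun y : D =>
          ENNReal.ofReal |∑ k ∈ Finset.Ico N M, ξ k ω * f k (y : T)|) x
      exact (ENNReal.ofReal_lt_ofReal_iff hδ).mp (lt_of_le_of_lt key hωE)
    -- step 2: extend to all of T by continuity
    have hSNcont : Continuous (fun t => ∑ k ∈ Finset.range N, ξ k ω * f k t) :=
      continuous_finset_sum _ fun k _ => continuous_const.mul (hf k)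
    have hWcont : Continuous (W ω) := hωconv.continuous
      (Eventually.of_forall fun M => continuous_finset_sum _ fun k _ => continuous_const.mul (hf k)).frequently
    have hstep2 : ∀ t, |W ω t - ∑ k ∈ Finset.range N, ξ k ω * f k t| ≤ δ := by
      intro t
      have hclosed : IsClosed {t : T | |W ω t - ∑ k ∈ Finset.range N, ξ k ω * f k t| ≤ δ} :=
        isClosed_le ((hWcont.sub hSNcont).abs) continuous_const
      have hsubD : D ⊆ {t : T | |W ω t - ∑ k ∈ Finset.range N, ξ k ω * f k t| ≤ δ} :=
        fun x hx => (hstep1 ⟨x, hx⟩).le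
      have hcl := hclosed.closure_subset_iff.mpr hsubD
      rw [hDdense.closure_eq] at hcl
      exact hcl (Set.mem_univ t)
    -- step 3: |S_N - w_N| ≤ δ on A
    have hstep3 : ∀ t, |(∑ k ∈ Finset.range N, ξ k ω * f k t) -
        ∑ k ∈ Finset.range N, a k * f k t| ≤ δ := by
      intro t
      rw [← Finset.sum_sub_distrib]
      calc |∑ k ∈ Finset.range N, (ξ k ω * f k t - a k * f k t)|
          ≤ ∑ k ∈ Finset.range N, |ξ k ω * f k t - a k * f k t| :=
            Finset.abs_sum_le_sum_abs _ _
        _ ≤ ∑ k ∈ Finset.range N, η * B k := by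
            refine Finset.sum_le_sum fun k hk => ?_
            have hωk : ξ k ω ∈ Metric.ball (a k) η := by
              have := Set.mem_iInter₂.mp hωA k hk
              exact this
            rw [Metric.mem_ball, Real.dist_eq] at hωk
            rw [← sub_mul, abs_mul]
            exact mul_le_mul hωk.le (hBle k t) (abs_nonneg _) hηpos.le
        _ = η * ∑ k ∈ Finset.range N, B k := (Finset.mul_sum _ _ _).symm
        _ ≤ η * (∑ k ∈ Finset.range N, B k + 1) :=
            mul_le_mul_of_nonneg_left (by linarith) hηpos.le
        _ = δ := by
            rw [hηdef]
            exact div_mul_cancel₀ δ (by linarith)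
    -- step 4: |w_N - w| ≤ δ
    have hstep4 : ∀ t, |(∑ k ∈ Finset.range N, a k * f k t) - w t| ≤ δ := by
      intro t
      have h := hN₀ N (le_max_right _ _) t
      rw [Real.dist_eq] at h
      rw [abs_sub_comm]
      exact h.le
    -- combine
    have hfinal : ∀ t, |W ω t - w t| ≤ 3 * δ := by
      intro t
      have h1 := abs_sub_le (W ω t) (∑ k ∈ Finset.range N, ξ k ω * f k t) (w t)
      have h2 := abs_sub_le (∑ k ∈ Finset.range N, ξ k ω * f k t)
        (∑ k ∈ Finset.range N, a k * f k t) (w t)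
      have := hstep2 t
      have := hstep3 t
      have := hstep4 t
      linarith
    refine lt_of_le_of_lt (ciSup_le hfinal) ?_
    rw [hδdef]
    linarith
  -- conclude
  have hpos : 0 < P (A ∩ E) := by
    rw [hAEeq]
    exact ENNReal.mul_pos hPApos hPE
  calc (0 : ENNReal) < P (A ∩ E) := hpos
    _ = P ((A ∩ E) \ {ω | ¬ TendstoUniformly
        (fun N t => ∑ k ∈ Finset.range N, ξ k ω * f k t) (W ω) atTop}) :=
          (measure_diff_null hbad).symm
    _ ≤ P {ω | (⨆ t, |W ω t - w t|) < ε} := measure_mono hsub
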